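/- Let β ≤ −1. Define, for measurable f ≥ 0 and x > 0, N₁^β f(x) = ∫_0^∞ χ_{{y < x/2 or y > 2x}} [ (xy)^{−2β} sup_{0<s≤1/4} (1−s)^{−2β} K_s^{−β}(x,y) ] f(y) dν_β(y). Then there is a constant C (depending only on β) such that ∫_0^∞ N₁^β f(x) dν_β(x) ≤ C ∫_0^∞ f(y) dν_β(y) for every 0 ≤ f ∈ L¹(dν_β); i.e. N₁^β is of strong type (1,1) with respect to ν_β. -/

import Mathlib

open MeasureTheory
open scoped ENNReal

/-- In dimension one, the measure `ν_β` on `(0,∞)` with density `x^{2β+1} e^{−x²}`. -/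
noncomputable def nu1 (β : ℝ) : Measure ℝ :=
  ((volume : Measure ℝ).withDensity fun x =>
    ENNReal.ofReal (x ^ (2 * β + 1) * Real.exp (-x ^ 2))).restrict (Set.Ioi 0)

/-- The one-dimensional kernel
`K_s^γ(x,y) = s^{−1/2} (x + √s)^{−2γ−1} exp(x² − ((1+s)x − (1−s)y)²/(8s))`. -/
noncomputable def Kker1 (γ s x y : ℝ) : ℝ :=
  s ^ (-(1 : ℝ) / 2) * (x + Real.sqrt s) ^ (-(2 * γ + 1)) *
    Real.exp (x ^ 2 - ((1 + s) * x - (1 - s) * y) ^ 2 / (8 * s))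

section Stmt11Aux

open Set ENNReal

lemma aux_rpow (p a s : ℝ) (hp : 0 < p) (ha : 0 < a) (hs : 0 < s) :
    s ^ (-p) * Real.exp (-(a / s)) ≤ (p / a) ^ p := by
  have h0 : (0:ℝ) < a / (p * s) := by positivity
  have h1 : a / (p * s) ≤ Real.exp (a / s / p) := by
    have h := Real.add_one_le_exp (a / s / p)
    have e : a / (p * s) = a / s / p := by rw [mul_comm, ← div_div]
    linarith
  have h2 : (a / (p * s)) ^ p ≤ Real.exp (a / s) := by
    calc (a / (p * s)) ^ p ≤ (Real.exp (a / s / p)) ^ p :=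
          Real.rpow_le_rpow h0.le h1 hp.le
      _ = Real.exp (a / s / p * p) := (Real.exp_mul _ p).symm
      _ = Real.exp (a / s) := by rw [div_mul_cancel₀ _ hp.ne']
  have h3 : Real.exp (-(a / s)) ≤ (a / (p * s)) ^ (-p) := by
    rw [Real.exp_neg, Real.rpow_neg h0.le]
    exact inv_anti₀ (Real.rpow_pos_of_pos h0 p) h2
  calc s ^ (-p) * Real.exp (-(a / s)) ≤ s ^ (-p) * (a / (p * s)) ^ (-p) := by
        exact mul_le_mul_of_nonneg_left h3 (Real.rpow_nonneg hs.le _)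
    _ = (s * (a / (p * s))) ^ (-p) := (Real.mul_rpow hs.le h0.le).symm
    _ = (a / p) ^ (-p) := by
        rw [show s * (a / (p * s)) = a / p by field_simp]
    _ = (p / a) ^ p := by
        rw [show p / a = (a / p)⁻¹ by rw [inv_div], ← Real.rpow_neg_one (a/p),
          ← Real.rpow_mul (by positivity)]
        norm_num

lemma ker_bound {β : ℝ} (hβ : β ≤ -1) {x y s : ℝ} (hx : 0 < x) (hy : 0 < y)
    (hreg : y < x / 2 ∨ 2 * x < y) (hs1 : 0 < s) (hs2 : s ≤ 1 / 4) :
    (1 - s) ^ (-2 * β) * Kker1 (-β) s x y ≤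
      (1024 * (1 - β)) ^ (1 - β) * max x y ^ (2 * β - 2) *
        Real.exp (x ^ 2 - max x y ^ 2 / 256) := by
  set m := max x y with hm
  have hm0 : 0 < m := lt_max_of_lt_left hx
  have hsq : 0 < Real.sqrt s := Real.sqrt_pos.2 hs1
  set D := (1 + s) * x - (1 - s) * y with hD
  have hD2 : m ^ 2 / 64 ≤ D ^ 2 := by
    rcases hreg with h | h
    · have hmx : m = x := max_eq_left (by linarith)
      have h1 : m / 8 ≤ D := by
        rw [hmx, hD]; nlinarith [mul_pos hs1 (by linarith : (0:ℝ) < x + y)]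
      nlinarith [hm0]
    · have hmy : m = y := max_eq_right (by linarith)
      have h1 : m / 8 ≤ -D := by
        rw [hmy, hD]
        nlinarith [mul_le_mul_of_nonneg_right hs2 (by linarith : (0:ℝ) ≤ x + y)]
      nlinarith [hm0]
  have hexp : Real.exp (x ^ 2 - D ^ 2 / (8 * s)) ≤
      Real.exp (-(m ^ 2 / 1024 / s)) * Real.exp (x ^ 2 - m ^ 2 / 256) := by
    rw [← Real.exp_add]
    apply Real.exp_le_exp.2
    have h1 : m ^ 2 / 64 / (8 * s) ≤ D ^ 2 / (8 * s) := by gcongr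
    have e1 : m ^ 2 / 64 / (8 * s) = m ^ 2 / 1024 / s + m ^ 2 / (1024 * s) := by
      field_simp; ring
    have h2 : m ^ 2 / 256 ≤ m ^ 2 / (1024 * s) := by
      rw [div_le_div_iff₀ (by norm_num) (by positivity)]
      nlinarith [sq_nonneg m]
    linarith
  have hone : (1 - s) ^ (-2 * β) ≤ 1 :=
    Real.rpow_le_one (by linarith) (by linarith) (by linarith)
  have hexpo : -(2 * (-β) + 1) = 2 * β - 1 := by ring
  have hbase : (x + Real.sqrt s) ^ (2 * β - 1) ≤ Real.sqrt s ^ (2 * β - 1) :=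
    Real.rpow_le_rpow_of_nonpos hsq (by linarith) (by linarith)
  have hsqrt : Real.sqrt s ^ (2 * β - 1) = s ^ ((2 * β - 1) / 2) := by
    rw [Real.sqrt_eq_rpow, ← Real.rpow_mul hs1.le]
    congr 1; ring
  calc (1 - s) ^ (-2 * β) * Kker1 (-β) s x y
      ≤ 1 * Kker1 (-β) s x y := by
        apply mul_le_mul_of_nonneg_right hone
        unfold Kker1
        positivity
    _ = s ^ (-(1:ℝ) / 2) * (x + Real.sqrt s) ^ (2 * β - 1) *
          Real.exp (x ^ 2 - D ^ 2 / (8 * s)) := by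
        rw [one_mul, Kker1, hexpo]
    _ ≤ s ^ (-(1:ℝ) / 2) * (s ^ ((2 * β - 1) / 2)) *
          (Real.exp (-(m ^ 2 / 1024 / s)) * Real.exp (x ^ 2 - m ^ 2 / 256)) := by
        apply mul_le_mul _ hexp (Real.exp_pos _).le (by positivity)
        exact mul_le_mul_of_nonneg_left (hbase.trans_eq hsqrt)
          (Real.rpow_nonneg hs1.le _)
    _ = (s ^ (-(1 - β)) * Real.exp (-(m ^ 2 / 1024 / s))) *
          Real.exp (x ^ 2 - m ^ 2 / 256) := by
        rw [← Real.rpow_add hs1]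
        ring_nf
    _ ≤ ((1 - β) / (m ^ 2 / 1024)) ^ (1 - β) * Real.exp (x ^ 2 - m ^ 2 / 256) := by
        exact mul_le_mul_of_nonneg_right
          (aux_rpow (1 - β) (m ^ 2 / 1024) s (by linarith) (by positivity) hs1)
          (Real.exp_pos _).le
    _ = (1024 * (1 - β)) ^ (1 - β) * m ^ (2 * β - 2) * Real.exp (x ^ 2 - m ^ 2 / 256) := by
        congr 1
        have e1 : (1 - β) / (m ^ 2 / 1024) = (1024 * (1 - β)) * (m ^ 2)⁻¹ := by
          field_simp
        rw [e1, Real.mul_rpow (by linarith) (by positivity),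
          Real.inv_rpow (by positivity), ← Real.rpow_neg (by positivity),
          ← Real.rpow_natCast m 2, ← Real.rpow_mul hm0.le]
        congr 1
        push_cast
        ring

lemma real_bd_right {β x y Cb : ℝ} (hx : 0 < x) (hy : 0 < y)
    (h : y < x / 2) (hCb : 0 ≤ Cb) :
    x ^ (2 * β + 1) * Real.exp (-x ^ 2) *
      ((x * y) ^ (-2 * β) * (Cb * max x y ^ (2 * β - 2) *
        Real.exp (x ^ 2 - max x y ^ 2 / 256))) ≤
      Cb * y ^ (-2 * β) * x ^ (2 * β - 1) := by
  have hmax : max x y = x := max_eq_left (by linarith)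
  rw [hmax, Real.mul_rpow hx.le hy.le]
  have hxs : x ^ (2 * β - 1) = x ^ (2 * β + 1) * x ^ (-2 * β) * x ^ (2 * β - 2) := by
    rw [← Real.rpow_add hx, ← Real.rpow_add hx]
    congr 1; ring
  have hes : Real.exp (-x ^ 2) * Real.exp (x ^ 2 - x ^ 2 / 256) =
      Real.exp (-(x ^ 2 / 256)) := by
    rw [← Real.exp_add]; congr 1; ring
  have e1 : x ^ (2 * β + 1) * Real.exp (-x ^ 2) *
      (x ^ (-2 * β) * y ^ (-2 * β) * (Cb * x ^ (2 * β - 2) *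
        Real.exp (x ^ 2 - x ^ 2 / 256))) =
      (Cb * y ^ (-2 * β) * x ^ (2 * β - 1)) * Real.exp (-(x ^ 2 / 256)) := by
    rw [hxs, ← hes]; ring
  rw [e1]
  have h2 : Real.exp (-(x ^ 2 / 256)) ≤ 1 :=
    Real.exp_le_one_iff.2 (neg_nonpos.2 (by positivity))
  calc (Cb * y ^ (-2 * β) * x ^ (2 * β - 1)) * Real.exp (-(x ^ 2 / 256))
      ≤ (Cb * y ^ (-2 * β) * x ^ (2 * β - 1)) * 1 :=
        mul_le_mul_of_nonneg_left h2 (by positivity)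
    _ = Cb * y ^ (-2 * β) * x ^ (2 * β - 1) := mul_one _

lemma real_bd_left {β x y Cb : ℝ} (hx : 0 < x) (hy : 0 < y)
    (h : 2 * x < y) (hCb : 0 ≤ Cb) :
    x ^ (2 * β + 1) * Real.exp (-x ^ 2) *
      ((x * y) ^ (-2 * β) * (Cb * max x y ^ (2 * β - 2) *
        Real.exp (x ^ 2 - max x y ^ 2 / 256))) ≤
      Cb * x / y ^ 2 := by
  have hmax : max x y = y := max_eq_right (by linarith)
  rw [hmax, Real.mul_rpow hx.le hy.le]
  have ex : x = x ^ (2 * β + 1) * x ^ (-2 * β) := by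
    rw [← Real.rpow_add hx, show 2 * β + 1 + -2 * β = 1 by ring, Real.rpow_one]
  have ey : (y ^ 2)⁻¹ = y ^ (-2 * β) * y ^ (2 * β - 2) := by
    rw [← Real.rpow_add hy, show -2 * β + (2 * β - 2) = -((2:ℕ):ℝ) by push_cast; ring,
      Real.rpow_neg hy.le, Real.rpow_natCast]
  have hes : Real.exp (-x ^ 2) * Real.exp (x ^ 2 - y ^ 2 / 256) =
      Real.exp (-(y ^ 2 / 256)) := by
    rw [← Real.exp_add]; congr 1; ring
  have e1 : x ^ (2 * β + 1) * Real.exp (-x ^ 2) *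
      (x ^ (-2 * β) * y ^ (-2 * β) * (Cb * y ^ (2 * β - 2) *
        Real.exp (x ^ 2 - y ^ 2 / 256))) =
      (Cb * x / y ^ 2) * Real.exp (-(y ^ 2 / 256)) := by
    rw [← hes]
    have e2 : Cb * x / y ^ 2 =
        Cb * (x ^ (2 * β + 1) * x ^ (-2 * β)) * (y ^ (-2 * β) * y ^ (2 * β - 2)) := by
      rw [← ex, ← ey]; ring
    rw [e2]; ring
  rw [e1]
  have h2 : Real.exp (-(y ^ 2 / 256)) ≤ 1 :=
    Real.exp_le_one_iff.2 (neg_nonpos.2 (by positivity))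
  calc (Cb * x / y ^ 2) * Real.exp (-(y ^ 2 / 256)) ≤ (Cb * x / y ^ 2) * 1 :=
        mul_le_mul_of_nonneg_left h2 (by positivity)
    _ = Cb * x / y ^ 2 := mul_one _

lemma xint {β : ℝ} (hβ : β ≤ -1) {y : ℝ} (hy : 0 < y) :
    (∫⁻ x, (if y < x / 2 ∨ 2 * x < y then
        ENNReal.ofReal ((x * y) ^ (-2 * β)) *
          ENNReal.ofReal ((1024 * (1 - β)) ^ (1 - β) * max x y ^ (2 * β - 2) *
            Real.exp (x ^ 2 - max x y ^ 2 / 256)) else 0) ∂(nu1 β))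
      ≤ ENNReal.ofReal ((1024 * (1 - β)) ^ (1 - β)) := by
  set Cb := ((1024 : ℝ) * (1 - β)) ^ (1 - β) with hCbdef
  have hCb0 : 0 < Cb := Real.rpow_pos_of_pos (by linarith) _
  have hdm : Measurable (fun x : ℝ => ENNReal.ofReal (x ^ (2 * β + 1) * Real.exp (-x ^ 2))) :=
    ((measurable_id.pow measurable_const).mul
      ((measurable_id.pow_const 2).neg.exp)).ennreal_ofReal
  have hSm : MeasurableSet {x : ℝ | y < x / 2 ∨ 2 * x < y} := by
    rw [Set.setOf_or]
    exact (measurableSet_lt measurable_const (measurable_id.div_const 2)).union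
      (measurableSet_lt (measurable_id.const_mul 2) measurable_const)
  have hgm : Measurable (fun x : ℝ => (if y < x / 2 ∨ 2 * x < y then
      ENNReal.ofReal ((x * y) ^ (-2 * β)) *
        ENNReal.ofReal (Cb * max x y ^ (2 * β - 2) *
          Real.exp (x ^ 2 - max x y ^ 2 / 256)) else 0 : ℝ≥0∞)) := by
    refine Measurable.ite hSm (Measurable.fun_mul ?_ ?_) measurable_const
    · exact ((measurable_id.mul_const y).pow measurable_const).ennreal_ofReal
    · refine Measurable.ennreal_ofReal (Measurable.mul (Measurable.mul measurable_const ?_) ?_)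
      · exact (measurable_id.max measurable_const).pow measurable_const
      · exact ((measurable_id.pow_const 2).sub
          (((measurable_id.max measurable_const).pow_const 2).div_const 256)).exp
  rw [nu1, restrict_withDensity measurableSet_Ioi,
    lintegral_withDensity_eq_lintegral_mul _ hdm hgm]
  have key : ∀ᵐ x ∂(volume.restrict (Ioi (0:ℝ))),
      ((fun x : ℝ => ENNReal.ofReal (x ^ (2 * β + 1) * Real.exp (-x ^ 2))) *
        (fun x : ℝ => (if y < x / 2 ∨ 2 * x < y then
          ENNReal.ofReal ((x * y) ^ (-2 * β)) *
            ENNReal.ofReal (Cb * max x y ^ (2 * β - 2) *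
              Real.exp (x ^ 2 - max x y ^ 2 / 256)) else 0))) x ≤
      (Ioo (0:ℝ) (y / 2)).indicator (fun x => ENNReal.ofReal (Cb * x / y ^ 2)) x +
        (Ioi (2 * y)).indicator
          (fun x => ENNReal.ofReal (Cb * y ^ (-2 * β) * x ^ (2 * β - 1))) x := by
    filter_upwards [ae_restrict_mem measurableSet_Ioi] with x hx
    have hx0 : (0:ℝ) < x := hx
    simp only [Pi.mul_apply]
    by_cases hreg : y < x / 2 ∨ 2 * x < y
    · rw [if_pos hreg]
      rw [← ENNReal.ofReal_mul (Real.rpow_nonneg (by positivity) _),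
        ← ENNReal.ofReal_mul
          (mul_nonneg (Real.rpow_nonneg hx0.le _) (Real.exp_pos _).le)]
      rcases hreg with h | h
      · refine le_trans ?_ le_add_self
        rw [Set.indicator_of_mem (by exact mem_Ioi.2 (by linarith))]
        exact ENNReal.ofReal_le_ofReal (real_bd_right hx hy h hCb0.le)
      · refine le_trans ?_ (le_add_right le_rfl)
        rw [Set.indicator_of_mem (by exact ⟨hx, by linarith⟩)]
        exact ENNReal.ofReal_le_ofReal (real_bd_left hx hy h hCb0.le)
    · rw [if_neg hreg, mul_zero]
      exact zero_le
  refine le_trans (lintegral_mono_ae key) ?_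
  refine le_trans (lintegral_mono' Measure.restrict_le_self le_rfl) ?_
  have hm1 : Measurable fun x : ℝ => (Ioo (0:ℝ) (y / 2)).indicator
      (fun x => ENNReal.ofReal (Cb * x / y ^ 2)) x :=
    (((measurable_const.mul measurable_id).div_const _).ennreal_ofReal).indicator
      measurableSet_Ioo
  rw [lintegral_add_left hm1]
  have piece1 : (∫⁻ x, (Ioo (0:ℝ) (y / 2)).indicator
      (fun x => ENNReal.ofReal (Cb * x / y ^ 2)) x) ≤ ENNReal.ofReal (Cb / 4) := by
    rw [lintegral_indicator measurableSet_Ioo]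
    calc (∫⁻ x in Ioo (0:ℝ) (y/2), ENNReal.ofReal (Cb * x / y ^ 2))
        ≤ ∫⁻ _ in Ioo (0:ℝ) (y/2), ENNReal.ofReal (Cb / (2 * y)) := by
          refine setLIntegral_mono measurable_const fun x hx => ?_
          apply ENNReal.ofReal_le_ofReal
          rw [div_le_div_iff₀ (by positivity) (by positivity)]
          nlinarith [mul_nonneg (mul_nonneg hCb0.le hy.le)
            (show (0:ℝ) ≤ y / 2 - x by linarith [hx.2])]
      _ = ENNReal.ofReal (Cb / (2 * y)) * volume (Ioo (0:ℝ) (y/2)) :=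
          setLIntegral_const _ _
      _ = ENNReal.ofReal (Cb / 4) := by
          rw [Real.volume_Ioo, ← ENNReal.ofReal_mul (by positivity)]
          congr 1
          field_simp
          ring
  have piece2 : (∫⁻ x, (Ioi (2 * y)).indicator
      (fun x => ENNReal.ofReal (Cb * y ^ (-2 * β) * x ^ (2 * β - 1))) x) ≤
      ENNReal.ofReal (Cb / 8) := by
    rw [lintegral_indicator measurableSet_Ioi]
    have hint : IntegrableOn (fun x : ℝ => Cb * y ^ (-2 * β) * x ^ (2 * β - 1))
        (Ioi (2 * y)) volume :=
      (integrableOn_Ioi_rpow_of_lt (by linarith) (by linarith)).const_mul _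
    have hnn : 0 ≤ᵐ[volume.restrict (Ioi (2 * y))]
        fun x : ℝ => Cb * y ^ (-2 * β) * x ^ (2 * β - 1) := by
      refine (ae_restrict_iff' measurableSet_Ioi).2 (ae_of_all _ fun x hx => ?_)
      have hx0 : 0 < x := lt_trans (by linarith) hx
      positivity
    rw [← ofReal_integral_eq_lintegral_ofReal hint hnn]
    apply ENNReal.ofReal_le_ofReal
    rw [MeasureTheory.integral_const_mul,
      integral_Ioi_rpow_of_lt (by linarith) (by linarith),
      show (2:ℝ) * β - 1 + 1 = 2 * β by ring]
    have e3 : ((2:ℝ) * y) ^ (2 * β) = 2 ^ (2 * β) * y ^ (2 * β) :=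
      Real.mul_rpow (by norm_num) hy.le
    have e4 : y ^ (-2 * β) * y ^ (2 * β) = 1 := by
      rw [← Real.rpow_add hy, show -2 * β + 2 * β = 0 by ring, Real.rpow_zero]
    have hne : (2 * β) ≠ 0 := ne_of_lt (by linarith)
    have hβne : β ≠ 0 := ne_of_lt (by linarith)
    have key2 : Cb * y ^ (-2 * β) * (-(2 * y) ^ (2 * β) / (2 * β)) =
        Cb * (2:ℝ) ^ (2 * β) * (-(2 * β))⁻¹ * (y ^ (-2 * β) * y ^ (2 * β)) := by
      rw [e3]
      field_simp [hβne]
    rw [key2, e4, mul_one]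
    have ht0 : (0:ℝ) < 2 ^ (2 * β) := Real.rpow_pos_of_pos (by norm_num) _
    have ht : (2:ℝ) ^ (2 * β) ≤ 1 / 4 := by
      have h1 : (2:ℝ) ^ (2 * β) ≤ 2 ^ (-((2:ℕ):ℝ)) :=
        Real.rpow_le_rpow_of_exponent_le one_le_two (by push_cast; linarith)
      rw [Real.rpow_neg (by norm_num), Real.rpow_natCast] at h1
      norm_num at h1
      linarith
    have hu0 : (0:ℝ) < (-(2 * β))⁻¹ := by
      apply inv_pos.2; linarith
    have hu : (-(2 * β))⁻¹ ≤ 1 / 2 := by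
      rw [show (1:ℝ)/2 = (2:ℝ)⁻¹ by norm_num]
      apply inv_anti₀ (by norm_num) (by linarith)
    have htu : (2:ℝ) ^ (2 * β) * (-(2 * β))⁻¹ ≤ 1 / 8 := by nlinarith
    calc Cb * (2:ℝ) ^ (2 * β) * (-(2 * β))⁻¹ = Cb * ((2:ℝ) ^ (2 * β) * (-(2 * β))⁻¹) := by ring
      _ ≤ Cb * (1/8) := mul_le_mul_of_nonneg_left htu hCb0.le
      _ = Cb / 8 := by ring
  calc (∫⁻ x, (Ioo (0:ℝ) (y / 2)).indicator (fun x => ENNReal.ofReal (Cb * x / y ^ 2)) x) +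
        (∫⁻ x, (Ioi (2 * y)).indicator
          (fun x => ENNReal.ofReal (Cb * y ^ (-2 * β) * x ^ (2 * β - 1))) x)
      ≤ ENNReal.ofReal (Cb / 4) + ENNReal.ofReal (Cb / 8) := add_le_add piece1 piece2
    _ = ENNReal.ofReal (Cb / 4 + Cb / 8) :=
        (ENNReal.ofReal_add (by positivity) (by positivity)).symm
    _ ≤ ENNReal.ofReal Cb := ENNReal.ofReal_le_ofReal (by linarith)


end Stmt11Aux

/-- For `β ≤ −1`, the operator
`N₁^β f(x) = ∫₀^∞ χ_{{y<x/2 or y>2x}} [(xy)^{−2β} sup_{0<s≤1/4} (1−s)^{−2β} K_s^{−β}(x,y)]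
f(y) dν_β(y)` is of strong type `(1,1)` with respect to `ν_β`. -/
theorem stmt11 (β : ℝ) (hβ : β ≤ -1) :
    ∃ C : ℝ, 0 < C ∧ ∀ f : ℝ → ℝ, (∀ y, 0 ≤ f y) → Integrable f (nu1 β) →
      (∫⁻ x, (∫⁻ y in {y : ℝ | y < x / 2 ∨ 2 * x < y},
          ENNReal.ofReal ((x * y) ^ (-2 * β)) *
            (⨆ s ∈ Set.Ioc (0 : ℝ) (1 / 4),
              ENNReal.ofReal ((1 - s) ^ (-2 * β) * Kker1 (-β) s x y)) *
            ENNReal.ofReal (f y) ∂(nu1 β)) ∂(nu1 β)) ≤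
        ENNReal.ofReal (C * ∫ y, f y ∂(nu1 β)) := by
  classical
  have hCb0 : (0:ℝ) < (1024 * (1 - β)) ^ (1 - β) :=
    Real.rpow_pos_of_pos (by linarith) _
  refine ⟨(1024 * (1 - β)) ^ (1 - β), hCb0, ?_⟩
  intro f hf0 hfi
  obtain ⟨g, hgm, hfg⟩ := hfi.aemeasurable
  have hg0 : ∀ᵐ y ∂(nu1 β), 0 ≤ g y := by
    filter_upwards [hfg] with y h
    rw [← h]; exact hf0 y
  have hgint : Integrable g (nu1 β) := hfi.congr hfg
  have haeIoi : ∀ᵐ x ∂(nu1 β), x ∈ Set.Ioi (0:ℝ) := by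
    unfold nu1; exact ae_restrict_mem measurableSet_Ioi
  haveI hsf : SFinite (nu1 β) := by unfold nu1; infer_instance
  set F : ℝ → ℝ → ℝ≥0∞ := fun x y =>
    if y < x / 2 ∨ 2 * x < y then
      ENNReal.ofReal ((x * y) ^ (-2 * β)) *
        ENNReal.ofReal ((1024 * (1 - β)) ^ (1 - β) * max x y ^ (2 * β - 2) *
          Real.exp (x ^ 2 - max x y ^ 2 / 256)) * ENNReal.ofReal (g y)
    else 0 with hFdef
  have hFmeas : Measurable (Function.uncurry F) := by
    have hSm : MeasurableSet {p : ℝ × ℝ | p.2 < p.1 / 2 ∨ 2 * p.1 < p.2} := by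
      rw [Set.setOf_or]
      exact (measurableSet_lt measurable_snd (measurable_fst.div_const 2)).union
        (measurableSet_lt (measurable_fst.const_mul 2) measurable_snd)
    rw [show Function.uncurry F = fun p : ℝ × ℝ =>
      if p.2 < p.1 / 2 ∨ 2 * p.1 < p.2 then
        ENNReal.ofReal ((p.1 * p.2) ^ (-2 * β)) *
          ENNReal.ofReal ((1024 * (1 - β)) ^ (1 - β) * max p.1 p.2 ^ (2 * β - 2) *
            Real.exp (p.1 ^ 2 - max p.1 p.2 ^ 2 / 256)) * ENNReal.ofReal (g p.2)
      else 0 from rfl]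
    refine Measurable.ite hSm (Measurable.fun_mul (Measurable.fun_mul ?_ ?_) ?_) measurable_const
    · exact ((measurable_fst.mul measurable_snd).pow measurable_const).ennreal_ofReal
    · refine Measurable.ennreal_ofReal ?_
      exact (measurable_const.mul
          ((measurable_fst.max measurable_snd).pow measurable_const)).mul
        (((measurable_fst.pow_const 2).sub
          (((measurable_fst.max measurable_snd).pow_const 2).div_const 256)).exp)
    · exact (hgm.comp measurable_snd).ennreal_ofReal
  have stepA : (∫⁻ x, (∫⁻ y in {y : ℝ | y < x / 2 ∨ 2 * x < y},
          ENNReal.ofReal ((x * y) ^ (-2 * β)) *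
            (⨆ s ∈ Set.Ioc (0 : ℝ) (1 / 4),
              ENNReal.ofReal ((1 - s) ^ (-2 * β) * Kker1 (-β) s x y)) *
            ENNReal.ofReal (f y) ∂(nu1 β)) ∂(nu1 β)) ≤
      ∫⁻ x, ∫⁻ y, F x y ∂(nu1 β) ∂(nu1 β) := by
    refine lintegral_mono_ae ?_
    filter_upwards [haeIoi] with x hx
    have hx0 : (0:ℝ) < x := hx
    have hSxm : MeasurableSet {y : ℝ | y < x / 2 ∨ 2 * x < y} := by
      rw [Set.setOf_or]
      exact measurableSet_Iio.union measurableSet_Ioi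
    rw [← lintegral_indicator hSxm]
    refine lintegral_mono_ae ?_
    filter_upwards [haeIoi, hfg] with y hy hfgy
    have hy0 : (0:ℝ) < y := hy
    by_cases hyS : y < x / 2 ∨ 2 * x < y
    · rw [Set.indicator_of_mem (show y ∈ {y : ℝ | y < x / 2 ∨ 2 * x < y} from hyS)]
      simp only [hFdef]
      rw [if_pos hyS, hfgy]
      refine mul_le_mul' (mul_le_mul' le_rfl ?_) le_rfl
      refine iSup₂_le fun s hs => ?_
      exact ENNReal.ofReal_le_ofReal (ker_bound hβ hx0 hy0 hyS hs.1 hs.2)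
    · rw [Set.indicator_of_notMem
        (show y ∉ {y : ℝ | y < x / 2 ∨ 2 * x < y} from hyS)]
      exact zero_le
  have swap : ∫⁻ x, ∫⁻ y, F x y ∂(nu1 β) ∂(nu1 β) =
      ∫⁻ y, ∫⁻ x, F x y ∂(nu1 β) ∂(nu1 β) :=
    lintegral_lintegral_swap hFmeas.aemeasurable
  have stepC : ∫⁻ y, ∫⁻ x, F x y ∂(nu1 β) ∂(nu1 β) ≤
      ENNReal.ofReal ((1024 * (1 - β)) ^ (1 - β)) *
        ∫⁻ y, ENNReal.ofReal (g y) ∂(nu1 β) := by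
    rw [← lintegral_const_mul' _ _ ENNReal.ofReal_ne_top]
    refine lintegral_mono_ae ?_
    filter_upwards [haeIoi] with y hy
    have hy0 : (0:ℝ) < y := hy
    have hF : ∀ x, F x y = (if y < x / 2 ∨ 2 * x < y then
        ENNReal.ofReal ((x * y) ^ (-2 * β)) *
          ENNReal.ofReal ((1024 * (1 - β)) ^ (1 - β) * max x y ^ (2 * β - 2) *
            Real.exp (x ^ 2 - max x y ^ 2 / 256))
        else 0) * ENNReal.ofReal (g y) := by
      intro x
      simp only [hFdef]
      by_cases h : y < x / 2 ∨ 2 * x < y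
      · rw [if_pos h, if_pos h]
      · rw [if_neg h, if_neg h, zero_mul]
    calc ∫⁻ x, F x y ∂(nu1 β)
        = (∫⁻ x, (if y < x / 2 ∨ 2 * x < y then
            ENNReal.ofReal ((x * y) ^ (-2 * β)) *
              ENNReal.ofReal ((1024 * (1 - β)) ^ (1 - β) * max x y ^ (2 * β - 2) *
                Real.exp (x ^ 2 - max x y ^ 2 / 256))
            else 0) ∂(nu1 β)) * ENNReal.ofReal (g y) := by
          simp_rw [hF]
          exact lintegral_mul_const' _ _ ENNReal.ofReal_ne_top
      _ ≤ ENNReal.ofReal ((1024 * (1 - β)) ^ (1 - β)) * ENNReal.ofReal (g y) :=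
          mul_le_mul' (xint hβ hy0) le_rfl
  have stepD : ∫⁻ y, ENNReal.ofReal (g y) ∂(nu1 β) =
      ENNReal.ofReal (∫ y, f y ∂(nu1 β)) := by
    rw [← ofReal_integral_eq_lintegral_ofReal hgint hg0]
    congr 1
    exact integral_congr_ae hfg.symm
  calc (∫⁻ x, (∫⁻ y in {y : ℝ | y < x / 2 ∨ 2 * x < y},
          ENNReal.ofReal ((x * y) ^ (-2 * β)) *
            (⨆ s ∈ Set.Ioc (0 : ℝ) (1 / 4),
              ENNReal.ofReal ((1 - s) ^ (-2 * β) * Kker1 (-β) s x y)) *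
            ENNReal.ofReal (f y) ∂(nu1 β)) ∂(nu1 β))
      ≤ ∫⁻ x, ∫⁻ y, F x y ∂(nu1 β) ∂(nu1 β) := stepA
    _ = ∫⁻ y, ∫⁻ x, F x y ∂(nu1 β) ∂(nu1 β) := swap
    _ ≤ ENNReal.ofReal ((1024 * (1 - β)) ^ (1 - β)) *
          ∫⁻ y, ENNReal.ofReal (g y) ∂(nu1 β) := stepC
    _ = ENNReal.ofReal ((1024 * (1 - β)) ^ (1 - β)) *
          ENNReal.ofReal (∫ y, f y ∂(nu1 β)) := by rw [stepD]
    _ = ENNReal.ofReal ((1024 * (1 - β)) ^ (1 - β) * ∫ y, f y ∂(nu1 β)) :=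
          (ENNReal.ofReal_mul hCb0.le).symm
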